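/- Let $h_1 \le \dots \le h_N$ be reals, $k < N$ a nonnegative integer, and suppose $z \in \{0,1\}^N$, $v \in \mathbb{R}$ satisfy $v \ge h_{N-k}$ and $v + (h_i - h_{N-k}) z_i \ge h_i$ for all $i > N-k$. Then for any chain of indices $N \ge j_1 > j_2 > \dots > j_\ell \ge N-k+1$, setting $j_{\ell+1} := N-k$, the mixing inequality $v + \sum_{m=1}^{\ell} (h_{j_m} - h_{j_{m+1}}) z_{j_m} \ge h_{j_1}$ holds. -/

import Mathlib

/-- Validity of mixing (star) inequalities: from the base inequalities
`v ≥ h_{N-k}` and `v + (h i - h_{N-k}) z i ≥ h i` for `i > N-k` (1-based),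
any chain `N ≥ j₁ > ⋯ > j_ℓ ≥ N-k+1` with `j_{ℓ+1} := N-k` yields the mixing inequality. -/
theorem stmt2 (N k ℓ : ℕ) (hk : k < N) (h : Fin N → ℝ) (hmono : Monotone h)
    (z : Fin N → ℝ) (hz : ∀ i, z i = 0 ∨ z i = 1) (v : ℝ)
    (hbase0 : h ⟨N - k - 1, by omega⟩ ≤ v)
    (hbase : ∀ i : Fin N, N - k < (i : ℕ) + 1 →
      h i ≤ v + (h i - h ⟨N - k - 1, by omega⟩) * z i)
    (j : Fin (ℓ + 1) → Fin N)
    (hdec : ∀ m : Fin ℓ, (j m.succ : ℕ) < (j m.castSucc : ℕ))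
    (hlast : j (Fin.last ℓ) = ⟨N - k - 1, by omega⟩) :
    h (j 0) ≤ v + ∑ m : Fin ℓ,
      (h (j m.castSucc) - h (j m.succ)) * z (j m.castSucc) := by
  induction ℓ with
  | zero =>
    have h0 : j 0 = j (Fin.last 0) := rfl
    rw [h0, hlast]
    simpa using hbase0
  | succ n ih =>
    -- shifted chain
    set j' : Fin (n + 1) → Fin N := fun m => j m.succ with hj'
    have hdec' : ∀ m : Fin n, (j' m.succ : ℕ) < (j' m.castSucc : ℕ) := by
      intro m
      have := hdec m.succ
      exact this
    have hlast' : j' (Fin.last n) = ⟨N - k - 1, by omega⟩ := by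
      simpa [hj', Fin.succ_last] using hlast
    have IH := ih j' hdec' hlast'
    have hsplit : ∑ m : Fin (n + 1),
        (h (j m.castSucc) - h (j m.succ)) * z (j m.castSucc)
        = (h (j 0) - h (j 1)) * z (j 0)
          + ∑ m : Fin n, (h (j' m.castSucc) - h (j' m.succ)) * z (j' m.castSucc) := by
      rw [Fin.sum_univ_succ]
      congr 1
    have hj'0 : j' 0 = j 1 := rfl
    rcases hz (j 0) with hz0 | hz0
    · -- z (j 0) = 0 : use base inequality at j 0 and nonnegativity of the sum
      have hanti : StrictAnti (fun m : Fin (n + 2) => (j m : ℕ)) :=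
        Fin.strictAnti_iff_succ_lt.mpr hdec
      have hlt : (j (Fin.last (n + 1)) : ℕ) < (j 0 : ℕ) :=
        hanti (by simp [Fin.pos_iff_ne_zero, Fin.lt_iff_val_lt_val])
      have hNk : N - k < (j 0 : ℕ) + 1 := by
        rw [hlast] at hlt; simp at hlt; omega
      have hb := hbase (j 0) hNk
      rw [hz0, mul_zero, add_zero] at hb
      have hsum_nonneg : 0 ≤ ∑ m : Fin (n + 1),
          (h (j m.castSucc) - h (j m.succ)) * z (j m.castSucc) := by
        apply Finset.sum_nonneg
        intro m _
        have hle : h (j m.succ) ≤ h (j m.castSucc) := by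
          apply hmono
          exact le_of_lt (hdec m)
        rcases hz (j m.castSucc) with hzm | hzm <;> rw [hzm] <;> nlinarith
      linarith
    · -- z (j 0) = 1
      rw [hsplit, hz0, mul_one]
      rw [hj'0] at IH
      linarith
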